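/- Let X, X', Y, Y' be finite types, set I := X × X' and J := Y × Y', let (M_t, M_f) be a binary measurement on ℂ^X and (N_t, N_f) a binary measurement on ℂ^Y. For each t ∈ {true, false} let E_t : Matrix I I ℂ → Matrix I I ℂ and F_t : Matrix J J ℂ → Matrix J J ℂ be linear maps, and let A_{t,u} (for t,u ∈ {true, false}) and B be expectations on I × J. Write M_{t,1} := (M_t ⊗ 1_{X'}) ⊗ 1_J and N_{u,2} := 1_I ⊗ (N_u ⊗ 1_{Y'}) on I × J, and set R*_{t,u}(A) := M_{t,1}ᴴ * N_{u,2}ᴴ * A * N_{u,2} * M_{t,1}. Define the if-denotations 𝐄(ρ) := E_true((M_t ⊗ 1_{X'}) * ρ * (M_t ⊗ 1_{X'})ᴴ) + E_false((M_f ⊗ 1_{X'}) * ρ * (M_f ⊗ 1_{X'})ᴴ) and 𝐅(σ) := F_true((N_t ⊗ 1_{Y'}) * σ * (N_t ⊗ 1_{Y'})ᴴ) + F_false((N_f ⊗ 1_{Y'}) * σ * (N_f ⊗ 1_{Y'})ᴴ). If qRHL(A_{t,u}, E_t, F_u, B) holds for all four choices of t,u ∈ {true, false}, then qRHL(∑_{t,u}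 R*_{t,u}(A_{t,u}), 𝐄, 𝐅, B) holds. [Rule JointIf4] -/

import Mathlib

open Matrix Kronecker ComplexOrder

noncomputable section

/-- Partial trace over the second factor: `tr₂(ρ) i i' = ∑ j, ρ (i,j) (i',j)`. -/
def trB {I J : Type*} [Fintype J] (ρ : Matrix (I × J) (I × J) ℂ) : Matrix I I ℂ :=
  Matrix.of fun i i' => ∑ j, ρ (i, j) (i', j)

/-- Partial trace over the first factor: `tr₁(ρ) j j' = ∑ i, ρ (i,j) (i,j')`. -/
def trA {I J : Type*} [Fintype I] (ρ : Matrix (I × J) (I × J) ℂ) : Matrix J J ℂ :=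
  Matrix.of fun j j' => ∑ i, ρ (i, j) (i, j')

/-- `ρ` is separable iff it is a finite sum of Kronecker products of
positive semidefinite matrices. -/
def Separable {I J : Type*} [Fintype I] [Fintype J]
    (ρ : Matrix (I × J) (I × J) ℂ) : Prop :=
  ∃ (n : ℕ) (σ : Fin n → Matrix I I ℂ) (τ : Fin n → Matrix J J ℂ),
    (∀ k, (σ k).PosSemidef) ∧ (∀ k, (τ k).PosSemidef) ∧ ρ = ∑ k, σ k ⊗ₖ τ k

/-- The expectation-qRHL judgment `qRHL(A, E1, E2, B)`. -/
def qRHL {I J : Type*} [Fintype I] [Fintype J]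
    (A : Matrix (I × J) (I × J) ℂ)
    (E1 : Matrix I I ℂ → Matrix I I ℂ) (E2 : Matrix J J ℂ → Matrix J J ℂ)
    (B : Matrix (I × J) (I × J) ℂ) : Prop :=
  ∀ ρ : Matrix (I × J) (I × J) ℂ, ρ.PosSemidef → Separable ρ →
    ∃ ρ' : Matrix (I × J) (I × J) ℂ, ρ'.PosSemidef ∧ Separable ρ' ∧
      trB ρ' = E1 (trB ρ) ∧ trA ρ' = E2 (trA ρ) ∧
      (Matrix.trace (A * ρ)).re ≤ (Matrix.trace (B * ρ')).re

section Aux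

set_option linter.unusedSectionVars false

variable {I J K L : Type*} [Fintype I] [Fintype J] [Fintype K] [Fintype L]
  [DecidableEq I] [DecidableEq J]

lemma kron_conjT (A : Matrix I J ℂ) (B : Matrix K L ℂ) : (A ⊗ₖ B)ᴴ = Aᴴ ⊗ₖ Bᴴ := by
  ext ⟨i, k⟩ ⟨j, l⟩
  simp [conjTranspose_apply, kroneckerMap_apply, star_mul']

lemma trB_kron (σ : Matrix I I ℂ) (τ : Matrix J J ℂ) : trB (σ ⊗ₖ τ) = τ.trace • σ := by
  ext i i'
  simp only [trB, of_apply, kroneckerMap_apply, Matrix.smul_apply, trace, diag_apply, smul_eq_mul]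
  rw [← Finset.mul_sum, mul_comm]

lemma trA_kron (σ : Matrix I I ℂ) (τ : Matrix J J ℂ) : trA (σ ⊗ₖ τ) = σ.trace • τ := by
  ext j j'
  simp only [trA, of_apply, kroneckerMap_apply, Matrix.smul_apply, trace, diag_apply, smul_eq_mul]
  rw [← Finset.sum_mul]

lemma trB_sum {n : Type*} (s : Finset n) (f : n → Matrix (I × J) (I × J) ℂ) :
    trB (∑ k ∈ s, f k) = ∑ k ∈ s, trB (f k) := by
  ext i i'
  simp only [trB, of_apply, Matrix.sum_apply]
  exact Finset.sum_comm

lemma trA_sum {n : Type*} (s : Finset n) (f : n → Matrix (I × J) (I × J) ℂ) :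
    trA (∑ k ∈ s, f k) = ∑ k ∈ s, trA (f k) := by
  ext j j'
  simp only [trA, of_apply, Matrix.sum_apply]
  exact Finset.sum_comm

lemma psd_kron {σ : Matrix I I ℂ} {τ : Matrix J J ℂ}
    (hσ : σ.PosSemidef) (hτ : τ.PosSemidef) : (σ ⊗ₖ τ).PosSemidef := by
  obtain ⟨s, rfl⟩ : ∃ s : Matrix I I ℂ, σ = sᴴ * s := by
    open scoped MatrixOrder Matrix.Norms.L2Operator in
    exact CStarAlgebra.nonneg_iff_eq_star_mul_self.mp hσ.nonneg
  obtain ⟨t, rfl⟩ : ∃ t : Matrix J J ℂ, τ = tᴴ * t := by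
    open scoped MatrixOrder Matrix.Norms.L2Operator in
    exact CStarAlgebra.nonneg_iff_eq_star_mul_self.mp hτ.nonneg
  rw [mul_kronecker_mul, ← kron_conjT]
  exact posSemidef_conjTranspose_mul_self _

lemma psd_sum {n : Type*} {s : Finset n} {f : n → Matrix I I ℂ}
    (h : ∀ k ∈ s, (f k).PosSemidef) : (∑ k ∈ s, f k).PosSemidef := by
  classical
  exact Finset.sum_induction f _ (fun a b ha hb => ha.add hb) .zero h

lemma separable_zero : Separable (0 : Matrix (I × J) (I × J) ℂ) :=
  ⟨0, fun _ => 0, fun _ => 0, fun k => k.elim0, fun k => k.elim0, by simp⟩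

lemma Separable.add' {ρ₁ ρ₂ : Matrix (I × J) (I × J) ℂ}
    (h₁ : Separable ρ₁) (h₂ : Separable ρ₂) : Separable (ρ₁ + ρ₂) := by
  obtain ⟨n₁, σ₁, τ₁, hσ₁, hτ₁, rfl⟩ := h₁
  obtain ⟨n₂, σ₂, τ₂, hσ₂, hτ₂, rfl⟩ := h₂
  refine ⟨n₁ + n₂, Fin.append σ₁ σ₂, Fin.append τ₁ τ₂, ?_, ?_, ?_⟩
  · intro k
    refine Fin.addCases (fun i => ?_) (fun i => ?_) k
    · rw [Fin.append_left]; exact hσ₁ i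
    · rw [Fin.append_right]; exact hσ₂ i
  · intro k
    refine Fin.addCases (fun i => ?_) (fun i => ?_) k
    · rw [Fin.append_left]; exact hτ₁ i
    · rw [Fin.append_right]; exact hτ₂ i
  · rw [Fin.sum_univ_add]
    simp [Fin.append_left, Fin.append_right]

lemma separable_sum {n : Type*} {s : Finset n} {f : n → Matrix (I × J) (I × J) ℂ}
    (h : ∀ k ∈ s, Separable (f k)) : Separable (∑ k ∈ s, f k) := by
  classical
  exact Finset.sum_induction f _ (fun a b ha hb => ha.add' hb) separable_zero h

/-- core computation for the partial trace over the second factor -/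
lemma trB_branch {n : ℕ} (Mt : Matrix I I ℂ) (Nu : Bool → Matrix J J ℂ)
    (hN : (Nu true)ᴴ * Nu true + (Nu false)ᴴ * Nu false = 1)
    (σ : Fin n → Matrix I I ℂ) (τ : Fin n → Matrix J J ℂ) :
    ∑ u : Bool, ∑ k, trB ((Mt * σ k * Mtᴴ) ⊗ₖ (Nu u * τ k * (Nu u)ᴴ))
      = Mt * (∑ k, trB (σ k ⊗ₖ τ k)) * Mtᴴ := by
  simp only [trB_kron]
  rw [Finset.sum_comm, Finset.mul_sum, Finset.sum_mul]
  refine Finset.sum_congr rfl fun k _ => ?_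
  have htr : ∑ u : Bool, (Nu u * τ k * (Nu u)ᴴ).trace = (τ k).trace := by
    rw [Fintype.sum_bool, trace_mul_cycle, trace_mul_cycle (Nu false),
      ← trace_add, ← add_mul, hN, one_mul]
  rw [← Finset.sum_smul, htr, mul_smul_comm, smul_mul_assoc]

/-- core computation for the partial trace over the first factor -/
lemma trA_branch {n : ℕ} (Mt : Bool → Matrix I I ℂ) (Nu : Matrix J J ℂ)
    (hM : (Mt true)ᴴ * Mt true + (Mt false)ᴴ * Mt false = 1)
    (σ : Fin n → Matrix I I ℂ) (τ : Fin n → Matrix J J ℂ) :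
    ∑ t : Bool, ∑ k, trA ((Mt t * σ k * (Mt t)ᴴ) ⊗ₖ (Nu * τ k * Nuᴴ))
      = Nu * (∑ k, trA (σ k ⊗ₖ τ k)) * Nuᴴ := by
  simp only [trA_kron]
  rw [Finset.sum_comm, Finset.mul_sum, Finset.sum_mul]
  refine Finset.sum_congr rfl fun k _ => ?_
  have htr : ∑ t : Bool, (Mt t * σ k * (Mt t)ᴴ).trace = (σ k).trace := by
    rw [Fintype.sum_bool, trace_mul_cycle, trace_mul_cycle (Mt false),
      ← trace_add, ← add_mul, hM, one_mul]
  rw [← Finset.sum_smul, htr, mul_smul_comm, smul_mul_assoc]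

lemma conj_sum_kron {n : ℕ} (Mt : Matrix I I ℂ) (Nu : Matrix J J ℂ)
    (σ : Fin n → Matrix I I ℂ) (τ : Fin n → Matrix J J ℂ) :
    (Mt ⊗ₖ Nu) * (∑ k, σ k ⊗ₖ τ k) * (Mt ⊗ₖ Nu)ᴴ
      = ∑ k, (Mt * σ k * Mtᴴ) ⊗ₖ (Nu * τ k * Nuᴴ) := by
  rw [Finset.mul_sum, Finset.sum_mul]
  refine Finset.sum_congr rfl fun k _ => ?_
  rw [kron_conjT, ← mul_kronecker_mul, ← mul_kronecker_mul]

/-- the key trace identity -/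
lemma trace_R {n : ℕ} (Mt : Matrix I I ℂ) (Nu : Matrix J J ℂ)
    (A : Matrix (I × J) (I × J) ℂ)
    (σ : Fin n → Matrix I I ℂ) (τ : Fin n → Matrix J J ℂ) :
    Matrix.trace ((Mt ⊗ₖ (1 : Matrix J J ℂ))ᴴ * ((1 : Matrix I I ℂ) ⊗ₖ Nu)ᴴ * A *
        ((1 : Matrix I I ℂ) ⊗ₖ Nu) * (Mt ⊗ₖ (1 : Matrix J J ℂ)) * (∑ k, σ k ⊗ₖ τ k))
      = Matrix.trace (A * ∑ k, (Mt * σ k * Mtᴴ) ⊗ₖ (Nu * τ k * Nuᴴ)) := by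
  have hP : ((1 : Matrix I I ℂ) ⊗ₖ Nu) * (Mt ⊗ₖ (1 : Matrix J J ℂ)) = Mt ⊗ₖ Nu := by
    rw [← mul_kronecker_mul, one_mul, mul_one]
  have hPH : (Mt ⊗ₖ (1 : Matrix J J ℂ))ᴴ * ((1 : Matrix I I ℂ) ⊗ₖ Nu)ᴴ = (Mt ⊗ₖ Nu)ᴴ := by
    rw [← conjTranspose_mul, hP]
  rw [hPH, Matrix.mul_assoc ((Mt ⊗ₖ Nu)ᴴ * A), hP, ← conj_sum_kron Mt Nu σ τ,
    Matrix.mul_assoc, Matrix.mul_assoc, trace_mul_comm, ← Matrix.mul_assoc,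
    ← Matrix.mul_assoc, Matrix.mul_assoc (A * (Mt ⊗ₖ Nu))]
  simp only [Matrix.mul_assoc]

end Aux

/-- Rule JointIf4: simultaneous if-statements on both sides, with all four
branch combinations. -/
theorem qRHL_jointIf4 {X X' Y Y' : Type*}
    [Fintype X] [Fintype X'] [Fintype Y] [Fintype Y']
    [DecidableEq X] [DecidableEq X'] [DecidableEq Y] [DecidableEq Y']
    (M : Bool → Matrix X X ℂ) (N : Bool → Matrix Y Y ℂ)
    (hM : (M true)ᴴ * M true + (M false)ᴴ * M false = 1)
    (hN : (N true)ᴴ * N true + (N false)ᴴ * N false = 1)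
    (E : Bool → (Matrix (X × X') (X × X') ℂ →ₗ[ℂ] Matrix (X × X') (X × X') ℂ))
    (F : Bool → (Matrix (Y × Y') (Y × Y') ℂ →ₗ[ℂ] Matrix (Y × Y') (Y × Y') ℂ))
    (A : Bool → Bool → Matrix ((X × X') × (Y × Y')) ((X × X') × (Y × Y')) ℂ)
    (B : Matrix ((X × X') × (Y × Y')) ((X × X') × (Y × Y')) ℂ)
    (hA : ∀ t u, (A t u).PosSemidef) (hB : B.PosSemidef)
    (h : ∀ t u, qRHL (A t u) (E t) (F u) B) :
    qRHL
      (∑ t : Bool, ∑ u : Bool,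
        ((M t ⊗ₖ (1 : Matrix X' X' ℂ)) ⊗ₖ (1 : Matrix (Y × Y') (Y × Y') ℂ))ᴴ *
          ((1 : Matrix (X × X') (X × X') ℂ) ⊗ₖ (N u ⊗ₖ (1 : Matrix Y' Y' ℂ)))ᴴ *
          A t u *
          ((1 : Matrix (X × X') (X × X') ℂ) ⊗ₖ (N u ⊗ₖ (1 : Matrix Y' Y' ℂ))) *
          ((M t ⊗ₖ (1 : Matrix X' X' ℂ)) ⊗ₖ (1 : Matrix (Y × Y') (Y × Y') ℂ)))
      (fun ρ => E true ((M true ⊗ₖ (1 : Matrix X' X' ℂ)) * ρ *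
            (M true ⊗ₖ (1 : Matrix X' X' ℂ))ᴴ) +
          E false ((M false ⊗ₖ (1 : Matrix X' X' ℂ)) * ρ *
            (M false ⊗ₖ (1 : Matrix X' X' ℂ))ᴴ))
      (fun σ => F true ((N true ⊗ₖ (1 : Matrix Y' Y' ℂ)) * σ *
            (N true ⊗ₖ (1 : Matrix Y' Y' ℂ))ᴴ) +
          F false ((N false ⊗ₖ (1 : Matrix Y' Y' ℂ)) * σ *
            (N false ⊗ₖ (1 : Matrix Y' Y' ℂ))ᴴ))
      B := by
  classical
  intro ρ hρ hsep
  obtain ⟨n, σ, τ, hσ, hτ, rfl⟩ := hsep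
  -- completeness of the extended measurements
  have hM1 : (M true ⊗ₖ (1 : Matrix X' X' ℂ))ᴴ * (M true ⊗ₖ (1 : Matrix X' X' ℂ)) +
      (M false ⊗ₖ (1 : Matrix X' X' ℂ))ᴴ * (M false ⊗ₖ (1 : Matrix X' X' ℂ)) = 1 := by
    rw [kron_conjT, kron_conjT, conjTranspose_one, ← mul_kronecker_mul,
      ← mul_kronecker_mul, one_mul, ← add_kronecker, hM, one_kronecker_one]
  have hN1 : (N true ⊗ₖ (1 : Matrix Y' Y' ℂ))ᴴ * (N true ⊗ₖ (1 : Matrix Y' Y' ℂ)) +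
      (N false ⊗ₖ (1 : Matrix Y' Y' ℂ))ᴴ * (N false ⊗ₖ (1 : Matrix Y' Y' ℂ)) = 1 := by
    rw [kron_conjT, kron_conjT, conjTranspose_one, ← mul_kronecker_mul,
      ← mul_kronecker_mul, one_mul, ← add_kronecker, hN, one_kronecker_one]
  -- the post-measurement states
  set ρt : Bool → Bool → Matrix ((X × X') × (Y × Y')) ((X × X') × (Y × Y')) ℂ :=
    fun t u => ∑ k, ((M t ⊗ₖ (1 : Matrix X' X' ℂ)) * σ k * (M t ⊗ₖ (1 : Matrix X' X' ℂ))ᴴ)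
      ⊗ₖ ((N u ⊗ₖ (1 : Matrix Y' Y' ℂ)) * τ k * (N u ⊗ₖ (1 : Matrix Y' Y' ℂ))ᴴ) with hρt
  have hρtpsd : ∀ t u, (ρt t u).PosSemidef := fun t u =>
    psd_sum fun k _ => psd_kron ((hσ k).mul_mul_conjTranspose_same _)
      ((hτ k).mul_mul_conjTranspose_same _)
  have hρtsep : ∀ t u, Separable (ρt t u) := fun t u =>
    ⟨n, _, _, fun k => (hσ k).mul_mul_conjTranspose_same _,
      fun k => (hτ k).mul_mul_conjTranspose_same _, rfl⟩
  choose ρ' h1 h2 h3 h4 h5 using fun t u => h t u (ρt t u) (hρtpsd t u) (hρtsep t u)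
  refine ⟨∑ t : Bool, ∑ u : Bool, ρ' t u, ?_, ?_, ?_, ?_, ?_⟩
  · exact psd_sum fun t _ => psd_sum fun u _ => h1 t u
  · exact separable_sum fun t _ => separable_sum fun u _ => h2 t u
  · -- trB
    rw [trB_sum]
    simp only [trB_sum, h3, ← map_sum, hρt]
    rw [Fintype.sum_bool]
    congr 1 <;> · congr 1; exact trB_branch _ (fun u => N u ⊗ₖ 1) hN1 σ τ
  · -- trA
    rw [trA_sum]
    simp only [trA_sum, h4, hρt]
    rw [Finset.sum_comm]
    simp only [← map_sum]
    rw [Fintype.sum_bool]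
    congr 1 <;> · congr 1; exact trA_branch (fun t => M t ⊗ₖ 1) _ hM1 σ τ
  · -- the trace inequality
    rw [Finset.sum_mul, trace_sum, Complex.re_sum]
    rw [Finset.mul_sum, trace_sum, Complex.re_sum]
    refine Finset.sum_le_sum fun t _ => ?_
    rw [Finset.sum_mul, trace_sum, Complex.re_sum]
    rw [Finset.mul_sum, trace_sum, Complex.re_sum]
    refine Finset.sum_le_sum fun u _ => ?_
    rw [trace_R]
    exact h5 t u
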